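/- Let λ1 = λ2 > λ3 > 0 with σ1 = 2λ1+λ3, f = λ1²λ3/σ1, and suppose λ1⁴ ≥ 8f². Define F^{11} = f(1/λ1−1/σ1) and F^{33} = f(1/λ3−1/σ1). Then f³/(λ1σ1⁴(F^{33})²) ≤ F^{11}/(2λ1σ1). -/

import Mathlib

theorem multiplicity_two_estimate (l1 l3 σ1 f F11 F33 : ℝ)
    (h13 : l1 > l3) (h3 : l3 > 0)
    (hσ1 : σ1 = 2 * l1 + l3) (hf : f = l1 ^ 2 * l3 / σ1)
    (hbig : l1 ^ 4 ≥ 8 * f ^ 2)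
    (hF11 : F11 = f * (1 / l1 - 1 / σ1)) (hF33 : F33 = f * (1 / l3 - 1 / σ1)) :
    f ^ 3 / (l1 * σ1 ^ 4 * F33 ^ 2) ≤ F11 / (2 * l1 * σ1) := by
  have h1 : l1 > 0 := lt_trans h3 h13
  have hs : σ1 > 0 := by rw [hσ1]; linarith
  have hfpos : f > 0 := by rw [hf]; positivity
  have hL : f ^ 3 / (l1 * σ1 ^ 4 * F33 ^ 2) = f * l3 ^ 2 / (4 * l1 ^ 3 * σ1 ^ 2) := by
    have : F33 = 2 * l1 * f / (l3 * σ1) := by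
      rw [hF33, hσ1]; field_simp; ring
    rw [this]; field_simp; ring
  have hR : F11 / (2 * l1 * σ1) = f * (l1 + l3) / (2 * l1 ^ 2 * σ1 ^ 2) := by
    have : F11 = (l1 + l3) * f / (l1 * σ1) := by
      rw [hF11, hσ1]; field_simp; ring
    rw [this]; field_simp
  rw [hL, hR, div_le_div_iff₀ (by positivity) (by positivity)]
  have key : l3 ^ 2 ≤ 2 * l1 * (l1 + l3) := by nlinarith
  nlinarith [mul_le_mul_of_nonneg_left key (show (0:ℝ) ≤ 2 * f * l1 ^ 2 * σ1 ^ 2 by positivity)]
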